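/- Let n ≥ 2 and let k := ⌊n/2⌋ − 1 (the greatest integer with 2k + 2 ≤ n). Then the map (ℤ/2)^{k+1} → G(𝔽₂[x]/(xⁿ)) sending (e₀, …, e_k) (with each eᵢ ∈ {0, 1}) to the square class of the unit ∏_{i=0}^{k} (1 + x^{2i+1})^{eᵢ} is an isomorphism of abelian groups; in particular, the square classes [1+x], [1+x³], …, [1+x^{2k+1}] form a basis of G(𝔽₂[x]/(xⁿ)) as an 𝔽₂-vector space. -/

import Mathlib

noncomputable section

def squareUnits (R : Type) [CommRing R] : Subgroup Rˣ :=
  (powMonoidHom 2 : Rˣ →* Rˣ).range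

def SqCl (R : Type) [CommRing R] : Type := Rˣ ⧸ squareUnits R

instance (R : Type) [CommRing R] : CommGroup (SqCl R) :=
  QuotientGroup.Quotient.commGroup (squareUnits R)

def cls {R : Type} [CommRing R] (a : Rˣ) : SqCl R := QuotientGroup.mk a

/-- The group homomorphism on square classes induced by a ring homomorphism. -/
def clsMap {R S : Type} [CommRing R] [CommRing S] (φ : R →+* S) : SqCl R →* SqCl S :=
  QuotientGroup.map (squareUnits R) (squareUnits S) (Units.map (φ : R →* S)) (by
    rintro x ⟨y, rfl⟩
    exact ⟨Units.map (φ : R →* S) y, by simp [powMonoidHom]⟩)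

/-- The ring `𝔽₂[x]/(xⁿ)` of truncated polynomials. -/
abbrev Rtrunc (n : ℕ) : Type :=
  Polynomial (ZMod 2) ⧸ Ideal.span {(Polynomial.X : Polynomial (ZMod 2)) ^ n}

/-- The class of `x` in `𝔽₂[x]/(xⁿ)`. -/
def xbar (n : ℕ) : Rtrunc n :=
  Ideal.Quotient.mk (Ideal.span {(Polynomial.X : Polynomial (ZMod 2)) ^ n}) Polynomial.X

/-- The canonical projection `𝔽₂[x]/(x^{n+1}) → 𝔽₂[x]/(xⁿ)`. -/
def truncMap (n : ℕ) : Rtrunc (n + 1) →+* Rtrunc n :=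
  Ideal.Quotient.factor
    (Ideal.span_singleton_le_span_singleton.mpr (pow_dvd_pow Polynomial.X n.le_succ))

/-! ### Auxiliary material -/

open Polynomial

theorem zmod2_cases : ∀ a : ZMod 2, a = 0 ∨ a = 1 := by decide

theorem xbar_pow (N m : ℕ) : xbar N ^ m = Ideal.Quotient.mk _ ((X : Polynomial (ZMod 2)) ^ m) := by
  rw [xbar, ← map_pow]

theorem xbar_pow_eq_zero (N : ℕ) {m : ℕ} (hm : N ≤ m) : xbar N ^ m = 0 := by
  rw [xbar_pow, Ideal.Quotient.eq_zero_iff_mem]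
  exact Ideal.mem_span_singleton.mpr (pow_dvd_pow _ hm)

theorem two_eq_zero (N : ℕ) : (2 : Rtrunc N) = 0 := by
  have h0 : ((2 : Polynomial (ZMod 2))) = 0 := by
    have h1 : (2 : Polynomial (ZMod 2)) = Polynomial.C 1 + Polynomial.C 1 := by
      rw [map_one]; ring
    rw [h1, ← map_add, show (1 + 1 : ZMod 2) = 0 by decide, map_zero]
  calc (2 : Rtrunc N) = Ideal.Quotient.mk _ (2 : Polynomial (ZMod 2)) := by rfl
    _ = 0 := by rw [h0, map_zero]

theorem add_self' {N : ℕ} (a : Rtrunc N) : a + a = 0 := by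
  have := two_eq_zero N
  calc a + a = 2 * a := by ring
    _ = 0 := by rw [this, zero_mul]

theorem odd_smul {N : ℕ} (m : ℕ) (a : Rtrunc N) : (2 * m + 1) • a = a := by
  rw [add_smul, one_smul, mul_comm 2 m, mul_smul, two_smul, add_self', smul_zero, zero_add]

/-- The basis `1, x, …, x^{N-1}` of `𝔽₂[x]/(x^N)`. -/
def bas (N : ℕ) : Module.Basis (Fin N) (ZMod 2) (Rtrunc N) :=
  (AdjoinRoot.powerBasisAux' (monic_X_pow N)).reindex (finCongr (natDegree_X_pow N))

theorem bas_repr (N : ℕ) (p : Polynomial (ZMod 2)) (j : Fin N) :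
    (bas N).repr (Ideal.Quotient.mk _ p) j = (p %ₘ (X ^ N)).coeff j := by
  erw [bas, Module.Basis.repr_reindex_apply]
  show (AdjoinRoot.powerBasisAux' (monic_X_pow N)).repr (AdjoinRoot.mk _ p) _
      = (p %ₘ (X ^ N)).coeff j
  rw [AdjoinRoot.powerBasisAux'_repr_apply_to_fun, AdjoinRoot.modByMonicHom_mk]
  rfl

theorem repr_xpow (N m : ℕ) (j : Fin N) :
    (bas N).repr (xbar N ^ m) j = if m = (j : ℕ) then 1 else 0 := by
  rw [xbar_pow, bas_repr]
  by_cases h : m < N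
  · rw [(modByMonic_eq_self_iff (monic_X_pow N)).mpr (by
      rw [degree_X_pow, degree_X_pow]; exact_mod_cast h), coeff_X_pow]
    simp [eq_comm]
  · rw [show ((X : Polynomial (ZMod 2)) ^ m) = X ^ (m - N) * X ^ N by
      rw [← pow_add]; congr 1; omega]
    rw [(Polynomial.modByMonic_eq_zero_iff_dvd (monic_X_pow N)).mpr (dvd_mul_left _ _)]
    rw [coeff_zero, if_neg (by omega)]

theorem bas_eq (N : ℕ) (i : Fin N) : bas N i = xbar N ^ (i : ℕ) := by
  apply (bas N).repr.injective
  ext j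
  rw [Module.Basis.repr_self, repr_xpow, Finsupp.single_apply]
  simp [Fin.val_eq_val, eq_comm]

/-- Differentiation `𝔽₂[x]/(x^{N+1}) → 𝔽₂[x]/(x^N)`. -/
def der (N : ℕ) : Rtrunc (N + 1) →ₗ[ZMod 2] Rtrunc N :=
  (bas (N + 1)).constr (ZMod 2) (fun i => (i : ℕ) • xbar N ^ ((i : ℕ) - 1))

theorem der_xpow (N m : ℕ) : der N (xbar (N + 1) ^ m) = m • xbar N ^ (m - 1) := by
  by_cases h : m < N + 1
  · rw [← bas_eq N.succ ⟨m, h⟩, der, Module.Basis.constr_basis]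
  · rw [xbar_pow_eq_zero _ (by omega), map_zero,
      xbar_pow_eq_zero N (by omega), smul_zero]

theorem tr_mk (N : ℕ) (p : Polynomial (ZMod 2)) :
    truncMap N (Ideal.Quotient.mk _ p) = Ideal.Quotient.mk _ p :=
  Ideal.Quotient.factor_mk _ _

theorem tr_xpow (N m : ℕ) : truncMap N (xbar (N + 1) ^ m) = xbar N ^ m := by
  rw [xbar_pow, tr_mk, xbar_pow]

theorem der_xpow_mul (N m j : ℕ) :
    der N (xbar (N + 1) ^ m * xbar (N + 1) ^ j)
      = truncMap N (xbar (N + 1) ^ m) * der N (xbar (N + 1) ^ j)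
        + truncMap N (xbar (N + 1) ^ j) * der N (xbar (N + 1) ^ m) := by
  rw [← pow_add, der_xpow, der_xpow, der_xpow, tr_xpow, tr_xpow]
  rcases Nat.eq_zero_or_pos m with hm | hm
  · subst hm; simp
  rcases Nat.eq_zero_or_pos j with hj | hj
  · subst hj; simp
  rw [mul_smul_comm, mul_smul_comm, ← pow_add, ← pow_add,
    show m + (j - 1) = m + j - 1 by omega, show j + (m - 1) = m + j - 1 by omega,
    ← add_smul, Nat.add_comm j m]

theorem der_mul (N : ℕ) (a b : Rtrunc (N + 1)) :
    der N (a * b) = truncMap N a * der N b + truncMap N b * der N a := by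
  obtain ⟨p, rfl⟩ := Ideal.Quotient.mk_surjective a
  obtain ⟨q, rfl⟩ := Ideal.Quotient.mk_surjective b
  induction p using Polynomial.induction_on' with
  | add f g hf hg =>
    rw [map_add, add_mul, map_add, map_add, map_add, hf, hg]; ring
  | monomial i c =>
    induction q using Polynomial.induction_on' with
    | add f g hf hg =>
      rw [map_add, mul_add, map_add, map_add, map_add, hf, hg]; ring
    | monomial i' c' =>
      rcases zmod2_cases c with rfl | rfl
      · simp
      rcases zmod2_cases c' with rfl | rfl
      · simp
      have h1 : (Ideal.Quotient.mk (Ideal.span {(X : Polynomial (ZMod 2)) ^ (N + 1)}))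
          (monomial i 1) = xbar (N + 1) ^ i := by
        rw [← C_mul_X_pow_eq_monomial, map_one, one_mul, xbar_pow]
      have h2 : (Ideal.Quotient.mk (Ideal.span {(X : Polynomial (ZMod 2)) ^ (N + 1)}))
          (monomial i' 1) = xbar (N + 1) ^ i' := by
        rw [← C_mul_X_pow_eq_monomial, map_one, one_mul, xbar_pow]
      rw [h1, h2, der_xpow_mul]

/-- Geometric series, the inverse of `1 + x^{t+1}`. -/
def geom (N t : ℕ) : Rtrunc N :=
  ∑ m ∈ Finset.range (N + 1), xbar N ^ ((t + 1) * m)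

theorem geom_spec (N t : ℕ) : (1 + xbar N ^ (t + 1)) * geom N t = 1 := by
  have h := geom_sum_mul (xbar N ^ (t + 1)) (N + 1)
  rw [← pow_mul] at h
  have h2 : xbar N ^ ((t + 1) * (N + 1)) = 0 :=
    xbar_pow_eq_zero N (le_trans (by omega) (Nat.le_mul_of_pos_left _ (by omega)))
  have h3 : geom N t = ∑ i ∈ Finset.range (N + 1), (xbar N ^ (t + 1)) ^ i := by
    unfold geom; congr 1; funext i; rw [← pow_mul]
  rw [h3]
  have h4 : (∑ i ∈ Finset.range (N + 1), (xbar N ^ (t + 1)) ^ i) * (xbar N ^ (t + 1) - 1)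
      = -1 := by rw [h, h2]; ring
  have h5 := two_eq_zero N
  linear_combination h4 + ((∑ i ∈ Finset.range (N + 1), (xbar N ^ (t + 1)) ^ i) - 1) * h5

/-- The unit `1 + x^{t+1}` of `𝔽₂[x]/(x^N)`. -/
def unitX (N t : ℕ) : (Rtrunc N)ˣ where
  val := 1 + xbar N ^ (t + 1)
  inv := geom N t
  val_inv := geom_spec N t
  inv_val := by rw [mul_comm]; exact geom_spec N t

/-- Logarithmic derivative of a unit. -/
def ld (N : ℕ) (u : (Rtrunc (N + 1))ˣ) : Rtrunc N :=
  truncMap N ↑u⁻¹ * der N ↑u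

theorem tr_inv_mul (N : ℕ) (u : (Rtrunc (N + 1))ˣ) :
    truncMap N ↑u⁻¹ * truncMap N ↑u = 1 := by
  rw [← map_mul, Units.inv_mul, map_one]

theorem ld_mul (N : ℕ) (u v : (Rtrunc (N + 1))ˣ) : ld N (u * v) = ld N u + ld N v := by
  have hu := tr_inv_mul N u
  have hv := tr_inv_mul N v
  unfold ld
  rw [mul_inv_rev, Units.val_mul, Units.val_mul, map_mul, der_mul]
  linear_combination (truncMap N ↑v⁻¹ * der N ↑v) * hu
    + (truncMap N ↑u⁻¹ * der N ↑u) * hv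
    + (truncMap N ↑u⁻¹ * truncMap N ↑u * truncMap N ↑v⁻¹ * der N ↑v
      - truncMap N ↑v⁻¹ * der N ↑v) * hv * 0

/-- Log-derivative of the generator `1 + x^{2i+1}`. -/
theorem ld_unitX (N t : ℕ) :
    ld N (unitX (N + 1) (2 * t)) = ∑ m ∈ Finset.range (N + 2), xbar N ^ ((2 * t + 1) * m + 2 * t)
    := by
  unfold ld
  have hval : ((unitX (N + 1) (2 * t) : (Rtrunc (N + 1))ˣ) : Rtrunc (N + 1))
      = xbar (N + 1) ^ 0 + xbar (N + 1) ^ (2 * t + 1) := by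
    show (1 : Rtrunc (N + 1)) + xbar (N + 1) ^ (2 * t + 1) = _
    rw [pow_zero]
  have hinv : ((↑(unitX (N + 1) (2 * t))⁻¹ : (Rtrunc (N + 1))ˣ) : Rtrunc (N + 1))
      = geom (N + 1) (2 * t) := rfl
  rw [hval, hinv, map_add, der_xpow, der_xpow]
  rw [show (0 : ℕ) • xbar N ^ (0 - 1) = 0 from zero_smul _ _, zero_add]
  rw [show 2 * t + 1 - 1 = 2 * t by omega, odd_smul]
  unfold geom
  rw [map_sum]
  rw [Finset.sum_mul]
  congr 1
  funext m
  rw [tr_xpow, ← pow_add]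

/-- The even coefficients of the logarithmic derivative. -/
def coefF (N k : ℕ) (h : 2 * k + 1 ≤ N) (u : (Rtrunc (N + 1))ˣ) : Fin (k + 1) → ZMod 2 :=
  fun j => (bas N).repr (ld N u) ⟨2 * j, by have := j.isLt; omega⟩

theorem coefF_mul (N k : ℕ) (h : 2 * k + 1 ≤ N) (u v : (Rtrunc (N + 1))ˣ) :
    coefF N k h (u * v) = coefF N k h u + coefF N k h v := by
  funext j
  show (bas N).repr (ld N (u * v)) _ = _
  rw [ld_mul, map_add]
  rfl

theorem coefF_sq (N k : ℕ) (h : 2 * k + 1 ≤ N) (w : (Rtrunc (N + 1))ˣ) :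
    coefF N k h (w ^ 2) = 0 := by
  rw [pow_two, coefF_mul]
  funext j
  show coefF N k h w j + coefF N k h w j = 0
  generalize coefF N k h w j = a
  revert a; decide

theorem coefF_prod (N k : ℕ) (h : 2 * k + 1 ≤ N) (s : Finset (Fin (k + 1)))
    (f : Fin (k + 1) → (Rtrunc (N + 1))ˣ) :
    coefF N k h (∏ i ∈ s, f i) = ∑ i ∈ s, coefF N k h (f i) := by
  classical
  induction s using Finset.induction_on with
  | empty =>
    funext j
    show (bas N).repr (ld N 1) _ = 0
    have : ld N (1 : (Rtrunc (N + 1))ˣ) = 0 := by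
      have := ld_mul N 1 1
      rw [mul_one] at this
      exact left_eq_add.mp this
    rw [this, map_zero]; rfl
  | insert _ _ hs ih =>
    rw [Finset.prod_insert hs, Finset.sum_insert hs, coefF_mul, ih]

theorem coefF_pow (N k : ℕ) (h : 2 * k + 1 ≤ N) (u : (Rtrunc (N + 1))ˣ) (m : ℕ) :
    coefF N k h (u ^ m) = m • coefF N k h u := by
  induction m with
  | zero =>
    rw [pow_zero, zero_smul]
    have h1 := coefF_mul N k h 1 1
    rw [mul_one] at h1
    funext j
    have := congrFun h1 j
    simpa using this.symm
  | succ m ih =>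
    rw [pow_succ, coefF_mul, ih, succ_nsmul]

theorem coefF_gen (N k : ℕ) (h : 2 * k + 1 ≤ N) (i j : Fin (k + 1)) (hji : (j : ℕ) ≤ i) :
    coefF N k h (unitX (N + 1) (2 * i)) j = if i = j then 1 else 0 := by
  show (bas N).repr (ld N (unitX (N + 1) (2 * i))) ⟨2 * j, _⟩ = _
  rw [ld_unitX, map_sum, Finsupp.finset_sum_apply]
  have key : ∀ m : ℕ, (bas N).repr (xbar N ^ ((2 * (i : ℕ) + 1) * m + 2 * i))
      ⟨2 * j, by have := j.isLt; omega⟩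
      = if (2 * (i : ℕ) + 1) * m + 2 * i = 2 * j then 1 else 0 := fun m => repr_xpow _ _ _
  calc (∑ m ∈ Finset.range (N + 2), (bas N).repr
        (xbar N ^ ((2 * (i : ℕ) + 1) * m + 2 * i)) ⟨2 * j, by have := j.isLt; omega⟩)
      = ∑ m ∈ Finset.range (N + 2),
          if (2 * (i : ℕ) + 1) * m + 2 * i = 2 * j then (1 : ZMod 2) else 0 := by
        apply Finset.sum_congr rfl; intro m _; exact key m
    _ = if i = j then 1 else 0 := by
        by_cases hij : i = j
        · subst hij
          rw [Finset.sum_eq_single 0]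
          · simp
          · intro b _ hb
            rw [if_neg]
            have hb1 : 1 ≤ b := Nat.one_le_iff_ne_zero.mpr hb
            nlinarith [hb1]
          · intro habs; exact absurd (Finset.mem_range.mpr (by omega)) habs
        · rw [if_neg hij, Finset.sum_eq_zero]
          intro m _
          rw [if_neg]
          intro habs
          rcases Nat.eq_zero_or_pos m with rfl | hm
          · simp at habs
            exact hij (Fin.ext (by omega))
          · have : (j : ℕ) ≤ (i : ℕ) := hji
            nlinarith [habs]

theorem cls_mul {R : Type} [CommRing R] (a b : Rˣ) : cls (a * b) = cls a * cls b := rfl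

theorem cls_pow {R : Type} [CommRing R] (a : Rˣ) (m : ℕ) : cls (a ^ m) = cls a ^ m := by
  induction m with
  | zero => rfl
  | succ m ih => rw [pow_succ, pow_succ, ← ih]; rfl

theorem cls_sq {R : Type} [CommRing R] (w : Rˣ) : cls (w ^ 2) = 1 :=
  (QuotientGroup.eq_one_iff _).mpr ⟨w, rfl⟩

theorem pow_mod_two {G : Type*} [Group G] (x : G) (hx : x ^ 2 = 1) (m : ℕ) :
    x ^ m = x ^ (m % 2) := by
  conv_lhs => rw [show m = 2 * (m / 2) + m % 2 by omega]
  rw [pow_add, pow_mul, hx, one_pow, one_mul]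

set_option maxHeartbeats 1600000 in
/-- For `n ≥ 2` and `k := ⌊n/2⌋ − 1`, the map
`(ℤ/2)^{k+1} → G(𝔽₂[x]/(xⁿ))`, `(e₀,…,e_k) ↦ [∏ᵢ (1 + x^{2i+1})^{eᵢ}]`, is an isomorphism of
abelian groups; i.e. the classes `[1+x], [1+x³], …, [1+x^{2k+1}]` form a basis of the
`𝔽₂`-vector space of square classes. -/
theorem sqcl_trunc_basis (n : ℕ) (hn : 2 ≤ n) (k : ℕ) (hk : k = n / 2 - 1) :
    ∃ e : (Fin (k + 1) → ZMod 2) ≃+ Additive (SqCl (Rtrunc n)),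
      ∀ v : Fin (k + 1) → ZMod 2, ∃ u : (Rtrunc n)ˣ,
        (u : Rtrunc n) = ∏ i : Fin (k + 1), (1 + xbar n ^ (2 * (i : ℕ) + 1)) ^ (v i).val ∧
        e v = Additive.ofMul (cls u) := by
  obtain ⟨N, rfl⟩ : ∃ N, n = N + 1 := ⟨n - 1, by omega⟩
  haveI hnorm : (squareUnits (Rtrunc (N + 1))).Normal :=
    ⟨fun x hx g => by rwa [mul_comm g x, mul_assoc, mul_inv_cancel, mul_one]⟩
  have hk2 : 2 * k + 1 ≤ N := by omega
  set gen : Fin (k + 1) → (Rtrunc (N + 1))ˣ := fun i => unitX (N + 1) (2 * (i : ℕ)) with hgendef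
  have genval : ∀ i : Fin (k + 1),
      ((gen i : (Rtrunc (N + 1))ˣ) : Rtrunc (N + 1)) = 1 + xbar (N + 1) ^ (2 * (i : ℕ) + 1) :=
    fun i => rfl
  have gensq : ∀ i, cls (gen i) ^ 2 = 1 := fun i => by rw [← cls_pow]; exact cls_sq _
  set Φf : (Fin (k + 1) → ZMod 2) → Additive (SqCl (Rtrunc (N + 1))) :=
    fun v => Additive.ofMul (cls (∏ i, gen i ^ (v i).val)) with hΦf
  have hcls_prod' : ∀ (s : Finset (Fin (k + 1))) (w : Fin (k + 1) → ℕ),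
      cls (∏ i ∈ s, gen i ^ w i) = ∏ i ∈ s, cls (gen i) ^ w i := by
    intro s w
    classical
    induction s using Finset.induction_on with
    | empty => rw [Finset.prod_empty, Finset.prod_empty]; rfl
    | insert _ _ hmem ih =>
      rw [Finset.prod_insert hmem, Finset.prod_insert hmem, cls_mul, cls_pow, ih]
  have hcls_prod : ∀ w : Fin (k + 1) → ℕ,
      cls (∏ i, gen i ^ w i) = ∏ i, cls (gen i) ^ w i := fun w => hcls_prod' _ w
  have hΦadd : ∀ a b, Φf (a + b) = Φf a + Φf b := by
    intro a b
    rw [hΦf]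
    show Additive.ofMul _ = Additive.ofMul _ + Additive.ofMul _
    rw [← ofMul_mul]
    congr 1
    rw [hcls_prod, hcls_prod, hcls_prod, ← Finset.prod_mul_distrib]
    apply Finset.prod_congr rfl
    intro i _
    rw [Pi.add_apply, ZMod.val_add, ← pow_mod_two _ (gensq i)]
    exact pow_add _ _ _
  -- injectivity
  have hinj : ∀ v, Φf v = 0 → v = 0 := by
    intro v hv
    have h1 : cls (∏ i, gen i ^ (v i).val) = 1 := by
      have := hv
      rw [hΦf] at this
      exact ofMul_eq_zero.mp this
    obtain ⟨w, hw⟩ := (QuotientGroup.eq_one_iff _).mp h1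
    have hw' : w ^ 2 = ∏ i, gen i ^ (v i).val := hw
    have hF : ∑ i, (v i).val • coefF N k hk2 (gen i) = 0 := by
      calc ∑ i, (v i).val • coefF N k hk2 (gen i)
          = ∑ i, coefF N k hk2 (gen i ^ (v i).val) := by
            apply Finset.sum_congr rfl; intro i _; rw [coefF_pow]
        _ = coefF N k hk2 (∏ i, gen i ^ (v i).val) := (coefF_prod N k hk2 _ _).symm
        _ = coefF N k hk2 (w ^ 2) := by rw [hw']
        _ = 0 := coefF_sq N k hk2 w
    have hzero : ∀ m : ℕ, ∀ j : Fin (k + 1), (j : ℕ) = m → v j = 0 := by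
      intro m
      induction m using Nat.strong_induction_on with
      | _ m ih =>
        intro j hj
        have hrow := congrFun hF j
        rw [Finset.sum_apply] at hrow
        have hsingle : ∀ b : Fin (k + 1), b ∈ Finset.univ → b ≠ j →
            ((v b).val • coefF N k hk2 (gen b)) j = 0 := by
          intro b _ hb
          rcases lt_or_gt_of_ne (fun hc : (b : ℕ) = (j : ℕ) => hb (Fin.ext hc)) with hbj | hbj
          · have hvb : v b = 0 := ih (b : ℕ) (by omega) b rfl
            rw [Pi.smul_apply, hvb]
            simp
          · rw [Pi.smul_apply, hgendef, coefF_gen N k hk2 b j (le_of_lt hbj),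
              if_neg hb, smul_zero]
        rw [Finset.sum_eq_single j hsingle (fun habs => absurd (Finset.mem_univ j) habs)]
          at hrow
        rw [Pi.smul_apply, hgendef, coefF_gen N k hk2 j j le_rfl, if_pos rfl] at hrow
        have hcast : ((v j).val : ZMod 2) = 0 := by rwa [nsmul_eq_mul, mul_one] at hrow
        have : ((v j).val : ZMod 2) = v j := ZMod.natCast_rightInverse (v j)
        rw [this] at hcast
        exact hcast
    funext j
    exact hzero (j : ℕ) j rfl
  -- surjectivity
  have main : ∀ c d, 1 ≤ d → ∀ u : (Rtrunc (N + 1))ˣ, N + 1 ≤ d + c →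
      (∃ y, (u : Rtrunc (N + 1)) = 1 + xbar (N + 1) ^ d * y) →
      ∃ v, Φf v = Additive.ofMul (cls u) := by
    intro c
    induction c with
    | zero =>
      rintro d hd u hdc ⟨y, hy⟩
      have hx0 : xbar (N + 1) ^ d = 0 := xbar_pow_eq_zero _ (by omega)
      have hu : u = 1 := Units.ext (by rw [hy, hx0, zero_mul, add_zero]; rfl)
      refine ⟨0, ?_⟩
      rw [hu, hΦf]
      simp [ZMod.val_zero]
    | succ c ih =>
      rintro d hd u hdc ⟨y, hy⟩
      by_cases hdN : N + 1 ≤ d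
      · have hx0 : xbar (N + 1) ^ d = 0 := xbar_pow_eq_zero _ hdN
        have hu : u = 1 := Units.ext (by rw [hy, hx0, zero_mul, add_zero]; rfl)
        refine ⟨0, ?_⟩
        rw [hu, hΦf]
        simp [ZMod.val_zero]
      · push_neg at hdN
        obtain ⟨p, rfl⟩ := Ideal.Quotient.mk_surjective y
        set w : Rtrunc (N + 1) :=
          Ideal.Quotient.mk (Ideal.span {(X : Polynomial (ZMod 2)) ^ (N + 1)}) p.divX with hwdef
        have hdecomp : Ideal.Quotient.mk (Ideal.span {(X : Polynomial (ZMod 2)) ^ (N + 1)}) p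
            = Ideal.Quotient.mk _ (C (p.coeff 0)) + xbar (N + 1) * w := by
          rw [hwdef, xbar, ← map_mul, ← map_add]
          congr 1
          rw [add_comm]
          exact (X_mul_divX_add p).symm
        rcases zmod2_cases (p.coeff 0) with h0 | h0
        · apply ih (d + 1) (by omega) u (by omega)
          refine ⟨w, ?_⟩
          rw [hy, hdecomp, h0, map_zero, map_zero, zero_add]
          ring
        · have hy' : (u : Rtrunc (N + 1))
              = 1 + xbar (N + 1) ^ d * (1 + xbar (N + 1) * w) := by
            rw [hy, hdecomp, h0, map_one, map_one]
          obtain ⟨e, rfl⟩ : ∃ e, d = e + 1 := ⟨d - 1, by omega⟩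
          rcases Nat.even_or_odd (e + 1) with ⟨t, ht⟩ | ⟨t, ht⟩
          · -- even case: multiply by the square (1 + x^t)²
            obtain ⟨t', rfl⟩ : ∃ t', t = t' + 1 := ⟨t - 1, by omega⟩
            have hs : (((unitX (N + 1) t') ^ 2 : (Rtrunc (N + 1))ˣ) : Rtrunc (N + 1))
                = 1 + xbar (N + 1) ^ (e + 1) := by
              rw [Units.val_pow_eq_pow_val]
              show (1 + xbar (N + 1) ^ (t' + 1)) ^ 2 = 1 + xbar (N + 1) ^ (e + 1)
              rw [show e + 1 = (t' + 1) + (t' + 1) by omega]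
              linear_combination (xbar (N + 1) ^ (t' + 1)) * two_eq_zero (N + 1)
            obtain ⟨v', hv'⟩ := ih (e + 2) (by omega) (u * (unitX (N + 1) t') ^ 2) (by omega)
              ⟨w + xbar (N + 1) ^ e * (1 + xbar (N + 1) * w), by
                rw [Units.val_mul, hy', hs]
                linear_combination (xbar (N + 1) ^ e * xbar (N + 1)) * two_eq_zero (N + 1)⟩
            refine ⟨v', ?_⟩
            rw [hv']
            congr 1
            rw [cls_mul, cls_sq, mul_one]
          · -- odd case: multiply by the generator 1 + x^{2t+1} = 1 + x^{e+1}
            have htk : t ≤ k := by omega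
            set i0 : Fin (k + 1) := ⟨t, by omega⟩ with hi0
            have hgen : ((gen i0 : (Rtrunc (N + 1))ˣ) : Rtrunc (N + 1))
                = 1 + xbar (N + 1) ^ (e + 1) := by
              rw [genval]
              congr 2
              show 2 * t + 1 = e + 1
              omega
            obtain ⟨v', hv'⟩ := ih (e + 2) (by omega) (u * gen i0) (by omega)
              ⟨w + xbar (N + 1) ^ e * (1 + xbar (N + 1) * w), by
                rw [Units.val_mul, hy', hgen]
                linear_combination (xbar (N + 1) ^ e * xbar (N + 1)) * two_eq_zero (N + 1)⟩
            refine ⟨v' + Pi.single (M := fun _ => ZMod 2) i0 1, ?_⟩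
            rw [hΦadd]
            have hprod : (∏ i, gen i ^ ((Pi.single (M := fun _ => ZMod 2) i0 1) i).val) = gen i0 := by
              rw [Finset.prod_eq_single i0
                (fun b _ hb => by rw [Pi.single_eq_of_ne hb, ZMod.val_zero, pow_zero])
                (fun h => absurd (Finset.mem_univ _) h), Pi.single_eq_same, ZMod.val_one,
                pow_one]
            have hsingle : Φf (Pi.single (M := fun _ => ZMod 2) i0 1) = Additive.ofMul (cls (gen i0)) := by
              show Additive.ofMul
                (cls (∏ i, gen i ^ ((Pi.single (M := fun _ => ZMod 2) i0 1) i).val)) = _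
              rw [hprod]
            rw [hv', hsingle, ← ofMul_mul]
            congr 1
            calc cls (u * gen i0) * cls (gen i0)
                = cls u * (cls (gen i0) * cls (gen i0)) := by
                  rw [cls_mul, mul_assoc]
              _ = cls u * cls (gen i0) ^ 2 := by rw [pow_two]
              _ = cls u := by rw [gensq, mul_one]
  have hsurj : ∀ z : Additive (SqCl (Rtrunc (N + 1))), ∃ v, Φf v = z := by
    intro z
    obtain ⟨u, hu⟩ := QuotientGroup.mk_surjective (Additive.toMul z)
    obtain ⟨pu, hpu⟩ := Ideal.Quotient.mk_surjective ((u : Rtrunc (N + 1)))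
    have hker : ∀ a ∈ Ideal.span {(X : Polynomial (ZMod 2)) ^ (N + 1)},
        constantCoeff a = 0 := by
      intro a ha
      obtain ⟨b, rfl⟩ := Ideal.mem_span_singleton.mp ha
      rw [map_mul, map_pow]
      have hX : constantCoeff (X : Polynomial (ZMod 2)) = 0 := by
        simp [constantCoeff_apply, coeff_X_zero]
      rw [hX, zero_pow (by omega), zero_mul]
    set ε : Rtrunc (N + 1) →+* ZMod 2 := Ideal.Quotient.lift _ constantCoeff hker with hε
    have hε1 : ε ↑u = 1 := by
      have hunit : IsUnit (ε ↑u) := ⟨Units.map (ε : Rtrunc (N + 1) →* ZMod 2) u, rfl⟩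
      rcases zmod2_cases (ε ↑u) with h | h
      · rw [h] at hunit; exact absurd hunit (by simp)
      · exact h
    have hcoeff : pu.coeff 0 = 1 := by
      have h2 : ε (Ideal.Quotient.mk _ pu) = constantCoeff pu := Ideal.Quotient.lift_mk _ _ _
      rw [hpu, hε1] at h2
      exact h2.symm
    have hy : (u : Rtrunc (N + 1)) = 1 + xbar (N + 1) ^ 1 *
        (Ideal.Quotient.mk (Ideal.span {(X : Polynomial (ZMod 2)) ^ (N + 1)}) pu.divX) := by
      have hdec2 : Ideal.Quotient.mk (Ideal.span {(X : Polynomial (ZMod 2)) ^ (N + 1)}) pu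
          = Ideal.Quotient.mk _ (C (pu.coeff 0))
            + xbar (N + 1) * Ideal.Quotient.mk _ pu.divX := by
        rw [xbar, ← map_mul, ← map_add]
        congr 1
        rw [add_comm]
        exact (X_mul_divX_add pu).symm
      rw [← hpu, hdec2, hcoeff, map_one, map_one, pow_one]
    obtain ⟨v, hv⟩ := main N 1 le_rfl u (by omega)
      ⟨Ideal.Quotient.mk (Ideal.span {(X : Polynomial (ZMod 2)) ^ (N + 1)}) pu.divX, hy⟩
    refine ⟨v, ?_⟩
    rw [hv]
    have : cls u = Additive.toMul z := hu
    rw [this, ofMul_toMul]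
  set Φ : (Fin (k + 1) → ZMod 2) →+ Additive (SqCl (Rtrunc (N + 1))) :=
    AddMonoidHom.mk' Φf hΦadd with hΦ
  have hbij : Function.Bijective Φ := by
    constructor
    · exact (injective_iff_map_eq_zero Φ).mpr hinj
    · exact hsurj
  refine ⟨AddEquiv.ofBijective Φ hbij, ?_⟩
  intro v
  refine ⟨∏ i, gen i ^ (v i).val, ?_, ?_⟩
  · have hcoe : ((∏ i, gen i ^ (v i).val : (Rtrunc (N + 1))ˣ) : Rtrunc (N + 1))
        = ∏ i, ((gen i ^ (v i).val : (Rtrunc (N + 1))ˣ) : Rtrunc (N + 1)) :=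
      map_prod (Units.coeHom (Rtrunc (N + 1))) _ _
    rw [hcoe]
    apply Finset.prod_congr rfl
    intro i _
    rw [Units.val_pow_eq_pow_val, genval]
  · rfl

end
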